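/- Let V = { (λ_n) ∈ B_{ℓ²} : (λ_n) is a decreasing sequence of nonnegative reals } and E ⊆ S^ℕ the set of pairwise disjoint sequences from S. Then the map T(( λ_n), (s_n)) = Σ_{n=1}^∞ λ_n s_n*, from V × E (with V carrying the weak topology of ℓ² and E the product topology) to the dual unit ball of JS with the weak-star topology, is continuous. -/

import Mathlib

open Set Filter Topology
open scoped Classical

variable {Γ : Type*}

/-- Sum of a finitely supported function `φ` over a set `s` (i.e. `s*(φ) = Σ_{a∈s} φ(a)`). -/
noncomputable def segSum (s : Set Γ) (φ : Γ →₀ ℝ) : ℝ :=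
  ∑ a ∈ φ.support, if a ∈ s then φ a else 0

/-- The candidate values `(Σ_i (Σ_{a∈s_i} φ(a))²)^{1/2}` over finite pairwise disjoint
families `{s_1,…,s_n} ⊆ S`. -/
noncomputable def jamesSet (S : Set (Set Γ)) (φ : Γ →₀ ℝ) : Set ℝ :=
  { r | ∃ F : Finset (Set Γ), ↑F ⊆ S ∧ (F : Set (Set Γ)).Pairwise Disjoint ∧
      r = Real.sqrt (∑ s ∈ F, (segSum s φ) ^ 2) }

/-- The James-`S` norm on finitely supported functions. -/
noncomputable def jamesNorm (S : Set (Set Γ)) (φ : Γ →₀ ℝ) : ℝ :=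
  sSup (jamesSet S φ)

/-- The characteristic function of a set, viewed in `Γ → ℝ`. -/
noncomputable def indicatorFun (s : Set Γ) : Γ → ℝ := s.indicator fun _ => 1

/-- A family of subsets of `Γ` is countably intersected (Definition 1.1). -/
structure IsCI (S : Set (Set Γ)) : Prop where
  /-- (a) pointwise closed -/
  closed : IsClosed (indicatorFun '' S)
  /-- (a) members countable -/
  countable : ∀ s ∈ S, s.Countable
  /-- (a) contains singletons -/
  singletons : ∀ γ : Γ, {γ} ∈ S
  /-- (b) differences are finite disjoint unions of members -/
  diff : ∀ s ∈ S, ∀ t ∈ S, ∃ F : Finset (Set Γ), ↑F ⊆ S ∧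
    (F : Set (Set Γ)).Pairwise Disjoint ∧ s \ t = ⋃₀ ↑F
  /-- (c) the enveloping condition -/
  env : ∃ st : Set Γ → Set Γ, (∀ t ∈ S, st t ∈ S ∧ t ⊆ st t) ∧
    ∀ s ∈ S, ∀ n : ℕ, ∀ ts : Fin n → Set Γ, (∀ i, ts i ∈ S) →
      ∃ t ∈ S, t ⊆ s \ (⋃ i, st (ts i)) ∧ (s \ ((⋃ i, st (ts i)) ∪ t)).Finite
  /-- (d) each `L_s = {s ∩ t : t ∈ S}` is countable -/
  inter_countable : ∀ s ∈ S, { u : Set Γ | ∃ t ∈ S, u = s ∩ t }.Countable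

/-- Pairing of a "dual vector" `g : Γ → ℝ` with a finitely supported function. -/
noncomputable def dPair (g : Γ → ℝ) (φ : Γ →₀ ℝ) : ℝ := ∑ a ∈ φ.support, φ a * g a

/-- The unit ball of the dual of `JS`, modelled as those `g : Γ → ℝ` whose pairing with every
finitely supported function is dominated by the James-`S` norm; the product topology on
`Γ → ℝ` is the weak-star topology on this ball. -/
def dualBall (S : Set (Set Γ)) : Set (Γ → ℝ) :=
  { g | ∀ φ : Γ →₀ ℝ, |dPair g φ| ≤ jamesNorm S φ }

/-- The dual norm of `g` as a functional on `(Φ, ‖·‖_{J-S})`. -/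
noncomputable def dualNorm (S : Set (Set Γ)) (g : Γ → ℝ) : ℝ :=
  sSup { r | ∃ φ : Γ →₀ ℝ, jamesNorm S φ ≤ 1 ∧ r = |dPair g φ| }

/-- The set `D = {Σ_{i=1}^n λ_i s_i* : s_i ∈ S pairwise disjoint, Σ λ_i² ≤ 1}`. -/
def Dset (S : Set (Set Γ)) : Set (Γ → ℝ) :=
  { g | ∃ (n : ℕ) (l : Fin n → ℝ) (s : Fin n → Set Γ), (∀ i, s i ∈ S) ∧
      Pairwise (Function.onFun Disjoint s) ∧ (∑ i, l i ^ 2) ≤ 1 ∧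
      g = fun γ => ∑ i, if γ ∈ s i then l i else 0 }


/-- `V`: decreasing nonnegative sequences in the unit ball of `ℓ²`, with the coordinatewise
topology (which agrees with the weak topology of `ℓ²` on its unit ball). -/
def Vset : Set (ℕ → ℝ) :=
  { l | (∀ F : Finset ℕ, ∑ n ∈ F, l n ^ 2 ≤ 1) ∧ Antitone l ∧ ∀ n, 0 ≤ l n }

/-- `E`: pairwise disjoint sequences from `S`, as sequences of characteristic functions with
the product topology. -/
def Eset (S : Set (Set Γ)) : Set (ℕ → Γ → ℝ) :=
  { f | ∃ s : ℕ → Set Γ, (∀ n, s n ∈ S) ∧ Pairwise (Function.onFun Disjoint s) ∧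
      ∀ n, f n = indicatorFun (s n) }


section AuxStmt8
variable {Γ : Type*}

lemma abs_segSum_le' (s : Set Γ) (φ : Γ →₀ ℝ) :
    |segSum s φ| ≤ ∑ a ∈ φ.support.filter (· ∈ s), |φ a| := by
  rw [segSum]
  calc |∑ a ∈ φ.support, if a ∈ s then φ a else 0|
      ≤ ∑ a ∈ φ.support, |if a ∈ s then φ a else 0| := Finset.abs_sum_le_sum_abs _ _
    _ = ∑ a ∈ φ.support, if a ∈ s then |φ a| else 0 := by
        refine Finset.sum_congr rfl fun a _ => ?_; split <;> simp
    _ = ∑ a ∈ φ.support.filter (· ∈ s), |φ a| := (Finset.sum_filter _ _).symm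

lemma jamesSet_ub' (S : Set (Set Γ)) (φ : Γ →₀ ℝ) :
    (∑ a ∈ φ.support, |φ a|) ∈ upperBounds (jamesSet S φ) := by
  rintro r ⟨F, -, hdisj, rfl⟩
  set M := ∑ a ∈ φ.support, |φ a| with hM
  have hM0 : 0 ≤ M := Finset.sum_nonneg fun a _ => abs_nonneg _
  have key : ∑ s ∈ F, (segSum s φ) ^ 2 ≤ M ^ 2 := by
    calc ∑ s ∈ F, (segSum s φ)^2
        ≤ ∑ s ∈ F, (∑ a ∈ φ.support.filter (· ∈ s), |φ a|)^2 := by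
          refine Finset.sum_le_sum fun s _ => ?_
          rw [← sq_abs (segSum s φ)]
          exact pow_le_pow_left₀ (abs_nonneg _) (abs_segSum_le' s φ) 2
      _ ≤ (∑ s ∈ F, ∑ a ∈ φ.support.filter (· ∈ s), |φ a|)^2 :=
          Finset.sum_sq_le_sq_sum_of_nonneg
            (fun s _ => Finset.sum_nonneg fun a _ => abs_nonneg _)
      _ ≤ M^2 := by
          refine pow_le_pow_left₀
            (Finset.sum_nonneg fun s _ => Finset.sum_nonneg fun a _ => abs_nonneg _) ?_ 2
          have hd : (↑F : Set (Set Γ)).PairwiseDisjoint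
              (fun s => φ.support.filter (· ∈ s)) := by
            intro s hs t ht hst
            have := hdisj hs ht hst
            simp only [Finset.disjoint_left, Finset.mem_filter]
            rintro a ⟨-, has⟩ ⟨-, hat⟩
            exact Set.disjoint_left.1 this has hat
          rw [← Finset.sum_biUnion hd]
          exact Finset.sum_le_sum_of_subset_of_nonneg
            (Finset.biUnion_subset.2 fun s _ => Finset.filter_subset _ _)
            (fun a _ _ => abs_nonneg _)
  calc Real.sqrt (∑ s ∈ F, (segSum s φ)^2) ≤ Real.sqrt (M^2) := Real.sqrt_le_sqrt key
    _ = M := Real.sqrt_sq hM0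

lemma jamesSet_bdd' (S : Set (Set Γ)) (φ : Γ →₀ ℝ) : BddAbove (jamesSet S φ) :=
  ⟨_, jamesSet_ub' S φ⟩

lemma mem_dualBall_aux (S : Set (Set Γ)) (l : ℕ → ℝ)
    (hl1 : ∀ F : Finset ℕ, ∑ n ∈ F, l n ^ 2 ≤ 1)
    (s : ℕ → Set Γ) (hsS : ∀ n, s n ∈ S) (hdisj : Pairwise (Function.onFun Disjoint s))
    (φ : Γ →₀ ℝ) :
    |dPair (fun γ => ∑' n, l n * (s n).indicator (fun _ => 1) γ) φ| ≤ jamesNorm S φ := by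
  rw [dPair]
  have huniq : ∀ a n m, a ∈ s n → a ∈ s m → n = m := by
    intro a n m hn hm
    by_contra hne
    exact Set.disjoint_left.1 (hdisj hne) hn hm
  set ν : Γ → ℕ := fun a => if h : ∃ m, a ∈ s m then h.choose else 0 with hν
  have hνs : ∀ a, (∃ m, a ∈ s m) → a ∈ s (ν a) := by
    intro a h; simp only [hν, dif_pos h]; exact h.choose_spec
  set I : Finset ℕ := φ.support.image ν with hI
  set σ : ℕ → ℝ := fun n => segSum (s n) φ with hσ
  have step1 : ∑ a ∈ φ.support, φ a * ∑' n, l n * (s n).indicator (fun _ => 1) a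
      = ∑ n ∈ I, l n * σ n := by
    have h1 : ∀ a ∈ φ.support, (∑' n, l n * (s n).indicator (fun _ => 1) a)
        = ∑ n ∈ I, l n * (s n).indicator (fun _ => 1) a := by
      intro a ha
      refine tsum_eq_sum fun n hn => ?_
      rcases Classical.em (a ∈ s n) with hmem | hmem
      · exact absurd (Finset.mem_image.2 ⟨a, ha, huniq a (ν a) n (hνs a ⟨n, hmem⟩) hmem⟩) hn
      · simp [Set.indicator_of_notMem hmem]
    calc ∑ a ∈ φ.support, φ a * ∑' n, l n * (s n).indicator (fun _ => 1) a
        = ∑ a ∈ φ.support, ∑ n ∈ I, l n * (φ a * (s n).indicator (fun _ => 1) a) := by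
          refine Finset.sum_congr rfl fun a ha => ?_
          rw [h1 a ha, Finset.mul_sum]
          exact Finset.sum_congr rfl fun n _ => by ring
      _ = ∑ n ∈ I, l n * ∑ a ∈ φ.support, φ a * (s n).indicator (fun _ => 1) a := by
          rw [Finset.sum_comm]
          exact Finset.sum_congr rfl fun n _ => (Finset.mul_sum _ _ _).symm
      _ = ∑ n ∈ I, l n * σ n := by
          refine Finset.sum_congr rfl fun n _ => ?_
          congr 1
          simp only [hσ, segSum]
          refine Finset.sum_congr rfl fun a _ => ?_
          rw [Set.indicator_apply]; split <;> simp
  rw [step1]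
  have hσ2 : (0:ℝ) ≤ ∑ n ∈ I, σ n ^ 2 := Finset.sum_nonneg fun n _ => sq_nonneg _
  have hcs : (∑ n ∈ I, l n * σ n) ^ 2 ≤ ∑ n ∈ I, σ n ^ 2 := by
    calc (∑ n ∈ I, l n * σ n) ^ 2 ≤ (∑ n ∈ I, l n ^ 2) * ∑ n ∈ I, σ n ^ 2 :=
        Finset.sum_mul_sq_le_sq_mul_sq I l σ
      _ ≤ 1 * ∑ n ∈ I, σ n ^ 2 := mul_le_mul_of_nonneg_right (hl1 I) hσ2
      _ = ∑ n ∈ I, σ n ^ 2 := one_mul _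
  have habs : |∑ n ∈ I, l n * σ n| ≤ Real.sqrt (∑ n ∈ I, σ n ^ 2) :=
    Real.abs_le_sqrt hcs
  refine habs.trans (le_csSup (jamesSet_bdd' S φ) ?_)
  set I' : Finset ℕ := I.filter (fun n => (s n).Nonempty) with hI'
  have hinj : Set.InjOn s ↑I' := by
    intro n hn m hm hnm
    by_contra hne
    have hd := hdisj hne
    rw [Function.onFun, hnm, disjoint_self] at hd
    have : (s m).Nonempty := (Finset.mem_filter.1 hm).2
    simp [hd] at this
  refine ⟨I'.image s, ?_, ?_, ?_⟩
  · intro t ht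
    obtain ⟨n, -, rfl⟩ := Finset.mem_image.1 (by exact_mod_cast ht)
    exact hsS n
  · intro t1 h1 t2 h2 hne
    obtain ⟨n, -, rfl⟩ := Finset.mem_image.1 (by exact_mod_cast h1)
    obtain ⟨m, -, rfl⟩ := Finset.mem_image.1 (by exact_mod_cast h2)
    exact hdisj (fun h => hne (by rw [h]))
  · congr 1
    rw [Finset.sum_image (fun n hn m hm => hinj hn hm)]
    exact (Finset.sum_filter_of_ne fun n hn h0 => by
      rcases Set.eq_empty_or_nonempty (s n) with he | hne
      · exact absurd (by simp [hσ, segSum, he] : σ n = 0) (by simpa using h0)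
      · exact hne).symm

end AuxStmt8

/-- The map `T((λ_n),(s_n)) = Σ_n λ_n s_n*` maps `V × E` into the dual unit ball of `JS` and
is continuous from `V × E` (weak topology on `V`, product topology on `E`) to the dual ball
with the weak-star topology (modelled as the product topology on `Γ → ℝ`). -/
theorem stmt8 {Γ : Type*} (S : Set (Set Γ)) :
    (∀ p : Vset × Eset S,
      (fun γ => ∑' n, (p.1 : ℕ → ℝ) n * (p.2 : ℕ → Γ → ℝ) n γ) ∈ dualBall S) ∧
    Continuous (fun p : Vset × Eset S =>
      (fun γ => ∑' n, (p.1 : ℕ → ℝ) n * (p.2 : ℕ → Γ → ℝ) n γ : Γ → ℝ)) := by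
  constructor
  · rintro ⟨⟨l, hl1, hl2, hl3⟩, f, s, hsS, hdisj, hfs⟩ φ
    have : (fun γ => ∑' n, l n * f n γ) = fun γ =>
        ∑' n, l n * (s n).indicator (fun _ => 1) γ := by
      funext γ
      refine tsum_congr fun n => ?_
      rw [hfs n, indicatorFun]
    simpa [this] using mem_dualBall_aux S l hl1 s hsS hdisj φ
  · refine continuous_pi fun γ => ?_
    have key : TendstoUniformly
        (fun N (p : Vset × Eset S) =>
          ∑ n ∈ Finset.range N, (p.1 : ℕ → ℝ) n * (p.2 : ℕ → Γ → ℝ) n γ)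
        (fun p => ∑' n, (p.1 : ℕ → ℝ) n * (p.2 : ℕ → Γ → ℝ) n γ) atTop := by
      rw [Metric.tendstoUniformly_iff]
      intro ε hε
      obtain ⟨N, hN⟩ := exists_nat_gt (1 / ε ^ 2)
      filter_upwards [eventually_ge_atTop (N + 1)] with M hM p
      obtain ⟨⟨l, hl1, hl2, hl3⟩, f, hf⟩ := p
      obtain ⟨s, hsS, hdisj, hfs⟩ := hf
      simp only [Subtype.coe_mk, Real.dist_eq]
      have hlM : ∀ h : ℝ, |h| ≤ l M → |h| < ε := by
        intro h hh
        have hMpos : (0:ℝ) < (M:ℝ) + 1 := by positivity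
        have h1 : ((M:ℝ) + 1) * l M ^ 2 ≤ 1 := by
          calc ((M:ℝ) + 1) * l M ^ 2 = ∑ _n ∈ Finset.range (M + 1), l M ^ 2 := by
                simp only [Finset.sum_const, Finset.card_range, nsmul_eq_mul]; push_cast; ring
            _ ≤ ∑ n ∈ Finset.range (M + 1), l n ^ 2 :=
                Finset.sum_le_sum fun n hn =>
                  pow_le_pow_left₀ (hl3 M) (hl2 (Nat.le_of_lt_succ (Finset.mem_range.1 hn))) 2
            _ ≤ 1 := hl1 _
        have hNM : (N:ℝ) ≤ (M:ℝ) := by exact_mod_cast le_trans (Nat.le_succ N) hM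
        have hM1 : (1 / ε ^ 2 : ℝ) < (M:ℝ) + 1 := by linarith
        have hε2 : (0:ℝ) < ε ^ 2 := by positivity
        have h2 : l M ^ 2 < ε ^ 2 := by
          have h3 : (1:ℝ) < ((M:ℝ) + 1) * ε ^ 2 := by
            rw [div_lt_iff₀ hε2] at hM1; linarith
          nlinarith
        have h4 : |h| ^ 2 < ε ^ 2 := by nlinarith [abs_nonneg h, hl3 M]
        exact lt_of_pow_lt_pow_left₀ 2 hε.le h4
      set h : ℕ → ℝ := fun n => l n * f n γ with hh
      by_cases hex : ∃ n, γ ∈ s n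
      · obtain ⟨n₀, hn₀⟩ := hex
        have hzero : ∀ n, n ≠ n₀ → h n = 0 := by
          intro n hn
          have : γ ∉ s n := fun hc => Set.disjoint_left.1 (hdisj hn) hc hn₀
          simp [hh, hfs n, indicatorFun, Set.indicator_of_notMem this]
        have htsum : ∑' n, h n = l n₀ := by
          rw [tsum_eq_single n₀ hzero]
          simp [hh, hfs n₀, indicatorFun, Set.indicator_of_mem hn₀]
        rcases lt_or_ge n₀ M with hlt | hle
        · have hsum : ∑ n ∈ Finset.range M, h n = l n₀ := by
            rw [Finset.sum_eq_single_of_mem n₀ (Finset.mem_range.2 hlt) fun n _ hn => hzero n hn]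
            simp [hh, hfs n₀, indicatorFun, Set.indicator_of_mem hn₀]
          rw [htsum, hsum, sub_self, abs_zero]; exact hε
        · have hsum : ∑ n ∈ Finset.range M, h n = 0 :=
            Finset.sum_eq_zero fun n hn =>
              hzero n (Nat.ne_of_lt (lt_of_lt_of_le (Finset.mem_range.1 hn) hle))
          rw [htsum, hsum, sub_zero]
          exact hlM _ (by rw [abs_of_nonneg (hl3 n₀)]; exact hl2 hle)
      · have hzero : ∀ n, h n = 0 := by
          intro n
          have : γ ∉ s n := fun hc => hex ⟨n, hc⟩
          simp [hh, hfs n, indicatorFun, Set.indicator_of_notMem this]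
        have h0 : (fun n => h n) = fun _ => (0:ℝ) := funext hzero
        rw [show ∑' n, h n = 0 by rw [h0]; exact tsum_zero,
          Finset.sum_eq_zero fun n _ => hzero n, sub_zero, abs_zero]
        exact hε
    refine key.continuous (Frequently.of_forall fun N => ?_)
    refine continuous_finset_sum _ fun n _ => ?_
    exact ((continuous_apply n).comp (continuous_subtype_val.comp continuous_fst)).mul
      (((continuous_apply γ).comp ((continuous_apply n).comp
        (continuous_subtype_val.comp continuous_snd))))
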